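/- Let q₀ ≥ ⋯ ≥ q_{n−1} be reals, m ≥ 1, n ≥ 2m+1, b > 0. Suppose r with 0 ≤ r ≤ m−1 is the smallest integer ≥ −1 satisfying w* ≥ (1/(n−m))·((r+1)·q_{n−m} + Σ_{h=r+1}^{n−m−1} q_h), and define c = ((n−m)·w* − Σ_{h=r+1}^{n−m−1} q_h)/(r+1). Append m−r−1 copies of q₀ + b and r+1 copies of c. If additionally q_{n−m} ≤ c < q_r, then the m-trimmed mean of the resulting n+m values equals w*. -/

import Mathlib

open Finset

/-- Median of a multiset of reals: average of the two middle order statistics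
(equal to the middle one for odd cardinality). -/
noncomputable def med (s : Multiset ℝ) : ℝ :=
  ((s.sort (· ≤ ·)).getD ((Multiset.card s - 1) / 2) 0 +
    (s.sort (· ≤ ·)).getD (Multiset.card s / 2) 0) / 2

/-- `m`-trimmed mean: remove the `m` largest and `m` smallest values and average the rest. -/
noncomputable def trimmedMean (m : ℕ) (s : Multiset ℝ) : ℝ :=
  ((((s.sort (· ≤ ·)).drop m).take (Multiset.card s - 2 * m)).sum) /
    ((Multiset.card s : ℝ) - 2 * m)

/-- The multiset of the first `n` values of `q`. -/
noncomputable def qMs (n : ℕ) (q : ℕ → ℝ) : Multiset ℝ :=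
  (Finset.range n).val.map q

lemma sum_map_range' (q : ℕ → ℝ) (a : ℕ) : ∀ len : ℕ,
    ((List.range' a len).map q).sum = ∑ h ∈ Finset.Ico a (a + len), q h := by
  intro len
  induction len with
  | zero => simp
  | succ k ih =>
    rw [List.range'_concat, List.map_append, List.sum_append, ih]
    have : a + (k + 1) = (a + k) + 1 := by omega
    rw [this, Finset.sum_Ico_succ_top (by omega)]
    simp [mul_comm]

theorem stmt16 (n m : ℕ) (hm : 1 ≤ m) (hn : 2 * m + 1 ≤ n) (q : ℕ → ℝ)
    (hq : ∀ i j, i ≤ j → j < n → q j ≤ q i) (b wstar : ℝ) (hb : 0 < b)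
    (r : ℕ) (hr2 : r ≤ m - 1)
    (hrineq : (1 / ((n : ℝ) - m)) *
      (((r : ℝ) + 1) * q (n - m) + ∑ h ∈ Finset.Ico (r + 1) (n - m), q h) ≤ wstar)
    (hrmin : ∀ r' : ℕ, r' < r →
      ¬ ((1 / ((n : ℝ) - m)) *
        (((r' : ℝ) + 1) * q (n - m) + ∑ h ∈ Finset.Ico (r' + 1) (n - m), q h) ≤ wstar))
    (hneg1 : ¬ ((1 / ((n : ℝ) - m)) * (∑ h ∈ Finset.range (n - m), q h) ≤ wstar))
    (c : ℝ)
    (hc : c = (((n : ℝ) - m) * wstar - ∑ h ∈ Finset.Ico (r + 1) (n - m), q h) / ((r : ℝ) + 1))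
    (hc1 : q (n - m) ≤ c) (hc2 : c < q r) :
    trimmedMean m (qMs n q + (Multiset.replicate (m - r - 1) (q 0 + b) +
      Multiset.replicate (r + 1) c)) = wstar := by
  have hr1 : r + 1 ≤ m := by omega
  have hmn : m < n := by omega
  have hrnm : r + 1 ≤ n - m - 1 := by omega
  -- the lists
  set A : List ℝ := ((List.range' (n - m) m).map q).reverse with hA
  set Qmid : List ℝ := (List.range' (r + 1) (n - m - 1 - r)).map q with hQmid
  set MidM : Multiset ℝ := Multiset.replicate (r + 1) c + (↑Qmid : Multiset ℝ) with hMidM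
  set B : List ℝ := MidM.sort (· ≤ ·) with hB
  set Clow : List ℝ := ((List.range' 0 (r + 1)).map q).reverse with hClow
  set Crep : List ℝ := List.replicate (m - r - 1) (q 0 + b) with hCrep
  set L : List ℝ := A ++ (B ++ (Clow ++ Crep)) with hL
  set s : Multiset ℝ := qMs n q + (Multiset.replicate (m - r - 1) (q 0 + b) +
      Multiset.replicate (r + 1) c) with hs
  -- multiset equality
  have hsplit : (List.range' 0 (r + 1) ++ (List.range' (r + 1) (n - m - 1 - r)
      ++ List.range' (n - m) m)) = List.range n := by
    rw [List.range_eq_range']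
    have h1 : List.range' (r + 1) (n - m - 1 - r) ++ List.range' (n - m) m
        = List.range' (r + 1) (n - r - 1) := by
      have := List.range'_append (s := r + 1) (m := n - m - 1 - r) (n := m) (step := 1)
      simp only [one_mul] at this
      have e1 : r + 1 + (n - m - 1 - r) = n - m := by omega
      have e2 : (n - m - 1 - r) + m = n - r - 1 := by omega
      rw [e1] at this; rw [← e2]; exact this
    rw [h1]
    have := List.range'_append (s := 0) (m := r + 1) (n := n - r - 1) (step := 1)
    simp only [one_mul, zero_add] at this
    have e3 : (r + 1) + (n - r - 1) = n := by omega
    rw [e3] at this; exact this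
  have hqms : qMs n q = (↑((List.range' 0 (r + 1)).map q) : Multiset ℝ)
      + ((↑Qmid : Multiset ℝ) + (↑((List.range' (n - m) m).map q) : Multiset ℝ)) := by
    show Multiset.map q (Finset.range n).val = _
    have h0 : (Finset.range n).val = ((List.range n : List ℕ) : Multiset ℕ) := rfl
    rw [h0, ← hsplit, Multiset.map_coe]
    simp only [List.map_append]
    rw [← Multiset.coe_add, ← Multiset.coe_add]
  have hperm : (↑L : Multiset ℝ) = s := by
    rw [hL, hs, hqms]
    simp only [← Multiset.coe_add]
    rw [hA, hClow, hCrep, Multiset.coe_reverse, Multiset.coe_reverse,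
      Multiset.coe_replicate, hB, Multiset.sort_eq, hMidM]
    abel
  -- membership characterizations
  have memA : ∀ a ∈ A, ∃ i, n - m ≤ i ∧ i < n ∧ a = q i := by
    intro a ha
    rw [hA, List.mem_reverse, List.mem_map] at ha
    obtain ⟨i, hi, rfl⟩ := ha
    rw [List.mem_range'_1] at hi
    exact ⟨i, hi.1, by omega, rfl⟩
  have memB : ∀ x ∈ B, x = c ∨ ∃ h', r + 1 ≤ h' ∧ h' < n - m ∧ x = q h' := by
    intro x hx
    rw [hB, Multiset.mem_sort, hMidM, Multiset.mem_add] at hx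
    rcases hx with hx | hx
    · left; exact Multiset.eq_of_mem_replicate hx
    · right
      rw [Multiset.mem_coe, hQmid, List.mem_map] at hx
      obtain ⟨i, hi, rfl⟩ := hx
      rw [List.mem_range'_1] at hi
      exact ⟨i, hi.1, by omega, rfl⟩
  have memClow : ∀ x ∈ Clow, ∃ i, i ≤ r ∧ x = q i := by
    intro x hx
    rw [hClow, List.mem_reverse, List.mem_map] at hx
    obtain ⟨i, hi, rfl⟩ := hx
    rw [List.mem_range'_1] at hi
    exact ⟨i, by omega, rfl⟩
  have memCrep : ∀ x ∈ Crep, x = q 0 + b := fun x hx => List.eq_of_mem_replicate hx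
  -- sortedness of rev-map pieces
  have sorted_rev : ∀ a len : ℕ, a + len ≤ n →
      (((List.range' a len).map q).reverse).Pairwise (· ≤ ·) := by
    intro a len hal
    rw [List.pairwise_reverse, List.pairwise_map]
    refine (List.pairwise_lt_range' (s := a) (n := len) 1 (by norm_num)).imp_of_mem ?_
    intro i j hi hj hij
    rw [List.mem_range'_1] at hi hj
    exact hq i j (le_of_lt hij) (by omega)
  -- cross bounds
  have crossClowCrep : ∀ x ∈ Clow, ∀ y ∈ Crep, x ≤ y := by
    intro x hx y hy
    obtain ⟨i, hi, rfl⟩ := memClow x hx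
    rw [memCrep y hy]
    have h1 : q i ≤ q 0 := hq 0 i (Nat.zero_le i) (by omega)
    linarith
  have crossB : ∀ x ∈ B, ∀ y ∈ Clow ++ Crep, x ≤ y := by
    intro x hx y hy
    have hxr : x ≤ q r := by
      rcases memB x hx with rfl | ⟨h', hh1, hh2, rfl⟩
      · exact le_of_lt hc2
      · exact hq r h' (by omega) (by omega)
    rcases List.mem_append.mp hy with hy | hy
    · obtain ⟨i, hi, rfl⟩ := memClow y hy
      exact le_trans hxr (hq i r hi (by omega))
    · rw [memCrep y hy]
      have : q r ≤ q 0 := hq 0 r (Nat.zero_le r) (by omega)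
      linarith
  have crossA : ∀ x ∈ A, ∀ y ∈ B ++ (Clow ++ Crep), x ≤ y := by
    intro x hx y hy
    obtain ⟨i, hi1, hi2, rfl⟩ := memA x hx
    have hx' : q i ≤ q (n - m) := hq (n - m) i hi1 hi2
    refine le_trans hx' ?_
    rcases List.mem_append.mp hy with hy | hy
    · rcases memB y hy with rfl | ⟨h', hh1, hh2, rfl⟩
      · exact hc1
      · exact hq h' (n - m) (le_of_lt hh2) (by omega)
    · rcases List.mem_append.mp hy with hy | hy
      · obtain ⟨j, hj, rfl⟩ := memClow y hy
        exact hq j (n - m) (by omega) (by omega)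
      · rw [memCrep y hy]
        have : q (n - m) ≤ q 0 := hq 0 (n - m) (Nat.zero_le _) (by omega)
        linarith
  have hCrepSorted : Crep.Pairwise (· ≤ ·) := by
    rw [hCrep, List.pairwise_replicate]
    right; exact le_refl _
  -- sortedness of L
  have hLsorted : L.Pairwise (· ≤ ·) := by
    rw [hL, List.pairwise_append, List.pairwise_append, List.pairwise_append]
    exact ⟨sorted_rev (n - m) m (by omega),
      ⟨Multiset.pairwise_sort _ _,
        ⟨sorted_rev 0 (r + 1) (by omega), hCrepSorted, crossClowCrep⟩, crossB⟩, crossA⟩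
  -- identify the sort
  have hsortL : s.sort (· ≤ ·) = L := by
    refine List.Perm.eq_of_pairwise' (Multiset.pairwise_sort _ _) hLsorted ?_
    rw [← Multiset.coe_eq_coe, Multiset.sort_eq, hperm]
  -- lengths
  have hlenA : A.length = m := by simp [hA]
  have hlenB : B.length = n - m := by
    rw [hB, Multiset.length_sort, hMidM]
    simp [hQmid]
    omega
  have hcards : Multiset.card s = n + m := by
    rw [hs]
    simp [qMs]
    omega
  -- compute
  rw [trimmedMean, hsortL, hcards, hL]
  have e1 : n + m - 2 * m = n - m := by omega
  rw [e1, List.drop_left' hlenA, List.take_left' hlenB]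
  -- sum of B
  have hBsum : B.sum = ((r : ℝ) + 1) * c + ∑ h ∈ Finset.Ico (r + 1) (n - m), q h := by
    have h1 : B.sum = MidM.sum := by
      rw [← Multiset.sum_coe, hB, Multiset.sort_eq]
    rw [h1, hMidM, Multiset.sum_add, Multiset.sum_replicate, Multiset.sum_coe, hQmid,
      sum_map_range' q (r + 1) (n - m - 1 - r)]
    have e2 : r + 1 + (n - m - 1 - r) = n - m := by omega
    rw [e2, nsmul_eq_mul]
    push_cast
    ring
  rw [hBsum, hc]
  have hnm0 : (n : ℝ) - m ≠ 0 := by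
    have : (m : ℝ) < n := by exact_mod_cast hmn
    linarith
  have hr0 : ((r : ℝ) + 1) ≠ 0 := by positivity
  have e3 : ((n + m : ℕ) : ℝ) - 2 * m = (n : ℝ) - m := by push_cast; ring
  rw [e3]
  field_simp
  ring
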